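/- With agents sorted v_1 ≥ ... ≥ v_n > 0 and k = max{l : Σ_{i=1}^l B_i ≤ v_l·Σ_{i=l+1}^n Γ_i}, if Σ_{i=1}^k B_i ≤ v_{k+1}·Σ_{i=k+1}^n Γ_i, then the mechanism's welfare equals MLW(x) = v_{k+1}·Σ_{i=k+1}^n Γ_i + Σ_{i=1}^k v_i·Γ_i ≥ v_{k+1}·Σ_{i=k+1}^n Γ_i. -/

import Mathlib

open Finset

/-- Case `∑_{i=1}^k B_i ≤ v_{k+1}·∑_{i=k+1}^n Γ_i` of the Differential Pricing
Mechanism (so `q = v_{k+1}`): the mechanism's welfare equals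
`v_{k+1}·∑_{i=k+1}^n Γ_i + ∑_{i=1}^k v_iΓ_i ≥ v_{k+1}·∑_{i=k+1}^n Γ_i`. -/
theorem stmt_15 (n k : ℕ) (v B Γ : ℕ → ℝ)
    (hv : ∀ i ∈ Icc 1 n, 0 < v i)
    (hsort : ∀ i ∈ Icc 1 n, ∀ j ∈ Icc 1 n, i ≤ j → v j ≤ v i)
    (hB : ∀ i ∈ Icc 1 n, 0 ≤ B i) (hΓ : ∀ i ∈ Icc 1 n, 0 ≤ Γ i)
    (hk1 : 1 ≤ k) (hkn : k + 1 ≤ n)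
    (hkle : ∑ i ∈ Icc 1 k, B i ≤ v k * ∑ i ∈ Icc (k+1) n, Γ i)
    (hkmax : ∀ l, 1 ≤ l → l ≤ n →
      (∑ i ∈ Icc 1 l, B i ≤ v l * ∑ i ∈ Icc (l+1) n, Γ i) → l ≤ k)
    (hcase : ∑ i ∈ Icc 1 k, B i ≤ v (k+1) * ∑ i ∈ Icc (k+1) n, Γ i)
    (q : ℝ) (hq : q = v (k+1))
    (x : ℕ → ℝ)
    (hx1 : ∀ i, 1 ≤ i → i ≤ k → x i = B i / q)
    (hx2 : x (k+1) = ∑ i ∈ Icc (k+2) n, Γ i - ∑ i ∈ Icc 1 k, B i / q)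
    (hx3 : ∀ i, k+2 ≤ i → i ≤ n → x i = -Γ i) :
    ∑ i ∈ Icc 1 n, (v i * Γ i + min (v i * x i) (B i))
      = v (k+1) * ∑ i ∈ Icc (k+1) n, Γ i + ∑ i ∈ Icc 1 k, v i * Γ i ∧
    v (k+1) * ∑ i ∈ Icc (k+1) n, Γ i ≤
      v (k+1) * ∑ i ∈ Icc (k+1) n, Γ i + ∑ i ∈ Icc 1 k, v i * Γ i := by

  subst hq
  have hmemk1 : (k+1) ∈ Icc 1 n := by simp only [mem_Icc]; omega
  have hvk1 : 0 < v (k+1) := hv _ hmemk1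
  -- split Icc 1 n
  have hsplitn : ∑ i ∈ Icc 1 n, (v i * Γ i + min (v i * x i) (B i))
      = ∑ i ∈ Icc 1 k, (v i * Γ i + min (v i * x i) (B i))
        + (v (k+1) * Γ (k+1) + min (v (k+1) * x (k+1)) (B (k+1)))
        + ∑ i ∈ Icc (k+2) n, (v i * Γ i + min (v i * x i) (B i)) := by
    have h1 : Icc 1 n = Icc 1 k ∪ Icc (k+1) n := by
      ext a; simp only [mem_Icc, mem_union]; omega
    have h2 : Disjoint (Icc 1 k) (Icc (k+1) n) := by
      rw [Finset.disjoint_left]; intro a ha hb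
      simp only [mem_Icc] at ha hb; omega
    have h3 : Icc (k+1) n = insert (k+1) (Icc (k+2) n) := by
      ext a; simp only [mem_Icc, mem_insert]; omega
    rw [h1, Finset.sum_union h2, h3, Finset.sum_insert (by simp only [mem_Icc]; omega)]
    ring
  -- terms for i ≤ k
  have hterm1 : ∀ i ∈ Icc 1 k, v i * Γ i + min (v i * x i) (B i) = v i * Γ i + B i := by
    intro i hi
    rw [mem_Icc] at hi
    have hmem : i ∈ Icc 1 n := by simp only [mem_Icc]; omega
    have hBi := hB i hmem
    have hvi : v (k+1) ≤ v i := hsort i hmem (k+1) hmemk1 (by omega)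
    rw [hx1 i hi.1 hi.2]
    congr 1
    have h1 : v (k+1) * (B i / v (k+1)) = B i := by field_simp
    have h2 : (0:ℝ) ≤ B i / v (k+1) := div_nonneg hBi hvk1.le
    exact min_eq_right (by nlinarith)
  -- value at k+1
  have hxk1 : v (k+1) * x (k+1)
      = v (k+1) * ∑ i ∈ Icc (k+2) n, Γ i - ∑ i ∈ Icc 1 k, B i := by
    rw [hx2, ← Finset.sum_div, mul_sub]
    congr 1
    field_simp
  have hnot : ¬ (∑ i ∈ Icc 1 (k+1), B i ≤ v (k+1) * ∑ i ∈ Icc (k+2) n, Γ i) := by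
    intro h
    have := hkmax (k+1) (by omega) hkn h
    omega
  have hsum1 : ∑ i ∈ Icc 1 (k+1), B i = ∑ i ∈ Icc 1 k, B i + B (k+1) :=
    Finset.sum_Icc_succ_top (by omega) _
  have htermk1 : min (v (k+1) * x (k+1)) (B (k+1)) = v (k+1) * x (k+1) := by
    apply min_eq_left
    rw [hxk1]
    rw [hsum1] at hnot
    push_neg at hnot
    linarith
  -- terms for i ≥ k+2
  have hterm3 : ∀ i ∈ Icc (k+2) n, v i * Γ i + min (v i * x i) (B i) = 0 := by
    intro i hi
    rw [mem_Icc] at hi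
    have hmem : i ∈ Icc 1 n := by simp only [mem_Icc]; omega
    have hBi := hB i hmem
    have hΓi := hΓ i hmem
    have hvi := hv i hmem
    rw [hx3 i hi.1 hi.2]
    have : min (v i * -Γ i) (B i) = v i * -Γ i :=
      min_eq_left (by nlinarith)
    rw [this]; ring
  have hΓsplit : ∑ i ∈ Icc (k+1) n, Γ i = Γ (k+1) + ∑ i ∈ Icc (k+2) n, Γ i := by
    have h3 : Icc (k+1) n = insert (k+1) (Icc (k+2) n) := by
      ext a; simp only [mem_Icc, mem_insert]; omega
    rw [h3, Finset.sum_insert (by simp only [mem_Icc]; omega)]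
  constructor
  · rw [hsplitn, Finset.sum_congr rfl hterm1, Finset.sum_congr rfl hterm3,
      htermk1, hxk1, hΓsplit, Finset.sum_add_distrib, Finset.sum_const_zero]
    ring
  · have : 0 ≤ ∑ i ∈ Icc 1 k, v i * Γ i := by
      apply Finset.sum_nonneg
      intro i hi
      rw [mem_Icc] at hi
      have hmem : i ∈ Icc 1 n := by simp only [mem_Icc]; omega
      exact mul_nonneg (hv i hmem).le (hΓ i hmem)
    linarith
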